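/- Let D_1 ≤ D_2 be even integers with D_1 ≥ 2, and consider the model in ℂ⁴ (n = d = 2) with P_1(z,w) = (z_1w_1)^{D_1/2} + (z_2w_2)^{D_1/2} and P_2(z,w) = (z_1w_1)^{D_2/2} + (z_2w_2)^{D_2/2}, with k_1 = D_1/2, k_2 = D_2/2 and k_0 = D_2/2. Then the pair c = (1,0), V = (1,1) is admissible: the diagonal matrix Q(ζ) with both diagonal entries equal to (D_1/2)²(−1)^{D_1/2−1}·ζ^{k_0+D_1/2−1} and zero off-diagonal entries satisfies ζ^{k_0} Σ_ℓ c_ℓ P_{ℓ,z_i w_j}((1−ζ)V, (1−conj ζ)·conj V) = (1−conj ζ)^{D_1−2} Q_{ij}(ζ) for all |ζ| = 1, and Q(ζ) is invertible for every |ζ| = 1; hence the model is admissible. -/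

import Mathlib

open ComplexConjugate

noncomputable section

/-- `P7 m = (z₁w₁)^m + (z₂w₂)^m` as a polynomial in the variables
`z = X ∘ Sum.inl`, `w = X ∘ Sum.inr` (case `n = 2`). -/
def P7 (m : ℕ) : MvPolynomial (Fin 2 ⊕ Fin 2) ℂ :=
  (MvPolynomial.X (Sum.inl 0) * MvPolynomial.X (Sum.inr 0)) ^ m +
    (MvPolynomial.X (Sum.inl 1) * MvPolynomial.X (Sum.inr 1)) ^ m

/-- The candidate diagonal matrix of polynomials
`Q(ζ) = diag((D₁/2)²(−1)^{D₁/2−1} ζ^{k₀+D₁/2−1})` with `k₀ = m₂`. -/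
def Q7 (m1 m2 : ℕ) (i j : Fin 2) : Polynomial ℂ :=
  if i = j then
    Polynomial.C ((m1 : ℂ) ^ 2 * (-1) ^ (m1 - 1)) * Polynomial.X ^ (m2 + m1 - 1)
  else 0

/-- The key scalar identity on the unit circle. -/
lemma key7 (k m2 : ℕ) (ζ : ℂ) (hζ0 : ζ ≠ 0) (hc : (starRingEnd ℂ) ζ = ζ⁻¹) :
  ζ ^ m2 *
      ((↑k + 1) *
        (((1 - ζ) * (1 - (starRingEnd ℂ) ζ)) ^ k +
          (1 - ζ) * (↑k * (((1 - ζ) * (1 - (starRingEnd ℂ) ζ)) ^ (k - 1) * (1 - (starRingEnd ℂ) ζ))))) =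
    (1 - (starRingEnd ℂ) ζ) ^ (2 * (k + 1) - 2) * (((k:ℂ) + 1) ^ 2 * (-1) ^ k * ζ ^ (m2 + k)) := by
  have h1 : 1 - (starRingEnd ℂ) ζ = -ζ⁻¹ * (1 - ζ) := by
    rw [hc]; field_simp; ring
  rcases k with _ | k
  · simp
  · have h2 : 2 * (k + 1 + 1) - 2 = 2 * (k + 1) := by omega
    have h3 : k + 1 - 1 = k := rfl
    rw [h2, h3, h1]
    have hA : (1 - ζ) * (-ζ⁻¹ * (1 - ζ)) = -1 * ζ⁻¹ * (1 - ζ) ^ 2 := by ring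
    have e1 : ∀ n : ℕ, ((1 - ζ) * (-ζ⁻¹ * (1 - ζ))) ^ n
        = (-1) ^ n * (ζ⁻¹) ^ n * ((1 - ζ) ^ 2) ^ n := by
      intro n; rw [hA, mul_pow, mul_pow]
    have e2 : (-ζ⁻¹ * (1 - ζ)) ^ (2 * (k + 1))
        = ((ζ⁻¹) ^ 2) ^ (k + 1) * ((1 - ζ) ^ 2) ^ (k + 1) := by
      rw [mul_pow, neg_pow, Even.neg_one_pow ⟨k+1, by ring⟩, one_mul, pow_mul, pow_mul]
    rw [e1, e1, e2]
    push_cast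
    simp only [inv_pow, ← pow_mul]
    field_simp
    ring

theorem stmt7 (D1 D2 m1 m2 : ℕ) (hD1 : 2 ≤ D1) (hD12 : D1 ≤ D2)
    (hm1 : D1 = 2 * m1) (hm2 : D2 = 2 * m2) :
    ∀ ζ : ℂ, ‖ζ‖ = 1 →
      (∀ i j : Fin 2,
        ζ ^ m2 * ∑ ℓ : Fin 2, ((![(1 : ℝ), 0] ℓ : ℝ) : ℂ) *
            MvPolynomial.eval
              (Sum.elim (fun p => (1 - ζ) * (![1, 1] : Fin 2 → ℂ) p)
                (fun p => (1 - conj ζ) * conj ((![1, 1] : Fin 2 → ℂ) p)))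
              (MvPolynomial.pderiv (Sum.inl i)
                (MvPolynomial.pderiv (Sum.inr j) (![P7 m1, P7 m2] ℓ)))
          = (1 - conj ζ) ^ (D1 - 2) * (Q7 m1 m2 i j).eval ζ) ∧
      IsUnit (Matrix.of fun i j : Fin 2 => (Q7 m1 m2 i j).eval ζ) := by
  obtain ⟨k, rfl⟩ : ∃ k, m1 = k + 1 := ⟨m1 - 1, by omega⟩
  intro ζ hζ
  have hζ0 : ζ ≠ 0 := by intro h; simp [h] at hζ
  have hns : Complex.normSq ζ = 1 := by
    rw [Complex.normSq_eq_norm_sq, hζ]; norm_num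
  have hmul : (starRingEnd ℂ) ζ * ζ = 1 := by
    rw [mul_comm, Complex.mul_conj, hns]; norm_num
  have hc : (starRingEnd ℂ) ζ = ζ⁻¹ := eq_inv_of_mul_eq_one_left hmul
  constructor
  · intro i j
    fin_cases i <;> fin_cases j <;>
      simp [P7, Q7, MvPolynomial.pderiv_pow, MvPolynomial.pderiv_mul, MvPolynomial.pderiv_X,
        Fin.sum_univ_two, hm1] <;>
      exact key7 k m2 ζ hζ0 hc
  · rw [Matrix.isUnit_iff_isUnit_det, Matrix.det_fin_two]
    simp [Q7, isUnit_iff_ne_zero, hζ0]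
    exact_mod_cast Nat.succ_ne_zero k
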